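/- Suppose n ≥ 3 is odd and 0 < R < R_n. Then the set {x = (C, J_1, …, J_n) ∈ M_n(R) : there exists k with a_k = b_k = (0,1) or a_k = b_k = (0,−1)} (configurations with a stretched-out arm parallel to the y-axis) is finite and has exactly 2^n elements. -/

import Mathlib

open Real

set_option maxHeartbeats 1600000

/-- Euclidean norm of a vector in ℝ². -/
noncomputable def enorm2 (v : ℝ × ℝ) : ℝ := Real.sqrt (v.1 ^ 2 + v.2 ^ 2)

lemma enorm2_eq_one {v : ℝ × ℝ} : enorm2 v = 1 ↔ v.1 ^ 2 + v.2 ^ 2 = 1 :=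
  Real.sqrt_eq_one

lemma circle_sols (a b t u1 u2 : ℝ) (hD0 : 0 < a ^ 2 + b ^ 2)
    (ht : (a ^ 2 + b ^ 2) * t ^ 2 = (4 - (a ^ 2 + b ^ 2)) / 4) :
    (u1 ^ 2 + u2 ^ 2 = 1 ∧ (u1 - a) ^ 2 + (u2 - b) ^ 2 = 1) ↔
      ((u1 = a / 2 - b * t ∧ u2 = b / 2 + a * t) ∨
       (u1 = a / 2 + b * t ∧ u2 = b / 2 - a * t)) := by
  have hDne : a ^ 2 + b ^ 2 ≠ 0 := ne_of_gt hD0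
  constructor
  · rintro ⟨e1, e2⟩
    have dot : a * u1 + b * u2 = (a ^ 2 + b ^ 2) / 2 := by linear_combination (e1 - e2) / 2
    have key : (a * u2 - b * u1) ^ 2 = ((a ^ 2 + b ^ 2) * t) ^ 2 := by
      linear_combination (a ^ 2 + b ^ 2) * e1
        - (a * u1 + b * u2 + (a ^ 2 + b ^ 2) / 2) * dot - (a ^ 2 + b ^ 2) * ht
    have key2 : (a * u2 - b * u1 - (a ^ 2 + b ^ 2) * t) *
        (a * u2 - b * u1 + (a ^ 2 + b ^ 2) * t) = 0 := by linear_combination key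
    rcases mul_eq_zero.1 key2 with hc | hc
    · left
      constructor
      · have h1 : (a ^ 2 + b ^ 2) * (u1 - (a / 2 - b * t)) = 0 := by
          linear_combination a * dot - b * hc
        have := mul_eq_zero.1 h1
        rcases this with h' | h'
        · exact absurd h' hDne
        · linarith
      · have h1 : (a ^ 2 + b ^ 2) * (u2 - (b / 2 + a * t)) = 0 := by
          linear_combination b * dot + a * hc
        rcases mul_eq_zero.1 h1 with h' | h'
        · exact absurd h' hDne
        · linarith
    · right
      constructor
      · have h1 : (a ^ 2 + b ^ 2) * (u1 - (a / 2 + b * t)) = 0 := by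
          linear_combination a * dot - b * hc
        rcases mul_eq_zero.1 h1 with h' | h'
        · exact absurd h' hDne
        · linarith
      · have h1 : (a ^ 2 + b ^ 2) * (u2 - (b / 2 - a * t)) = 0 := by
          linear_combination b * dot + a * hc
        rcases mul_eq_zero.1 h1 with h' | h'
        · exact absurd h' hDne
        · linarith
  · rintro (⟨h1, h2⟩ | ⟨h1, h2⟩) <;> subst h1 <;> subst h2 <;>
      exact ⟨by linear_combination ht, by linear_combination ht⟩

lemma circle_tangent (P Q : ℝ × ℝ) (h : (P.1 - Q.1) ^ 2 + (P.2 - Q.2) ^ 2 = 4) :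
    {J : ℝ × ℝ | enorm2 (P - J) = 1 ∧ enorm2 (J - Q) = 1} =
      {((P.1 + Q.1) / 2, (P.2 + Q.2) / 2)} := by
  ext J
  simp only [Set.mem_setOf_eq, Set.mem_singleton_iff, enorm2_eq_one, Prod.fst_sub,
    Prod.snd_sub, Prod.ext_iff]
  constructor
  · rintro ⟨e1, e2⟩
    have key : (P.1 - J.1 - (J.1 - Q.1)) ^ 2 + (P.2 - J.2 - (J.2 - Q.2)) ^ 2 = 0 := by
      nlinarith [e1, e2, h]
    have h1 : P.1 - J.1 - (J.1 - Q.1) = 0 := by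
      nlinarith [sq_nonneg (P.1 - J.1 - (J.1 - Q.1)), sq_nonneg (P.2 - J.2 - (J.2 - Q.2))]
    have h2 : P.2 - J.2 - (J.2 - Q.2) = 0 := by
      nlinarith [sq_nonneg (P.1 - J.1 - (J.1 - Q.1)), sq_nonneg (P.2 - J.2 - (J.2 - Q.2))]
    constructor <;> linarith
  · rintro ⟨h1, h2⟩
    rw [h1, h2]
    constructor <;> nlinarith [h]

lemma circle_two (P Q : ℝ × ℝ) (h0 : 0 < (P.1 - Q.1) ^ 2 + (P.2 - Q.2) ^ 2)
    (h4 : (P.1 - Q.1) ^ 2 + (P.2 - Q.2) ^ 2 < 4) :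
    ∃ X Y : ℝ × ℝ, X ≠ Y ∧
      {J : ℝ × ℝ | enorm2 (P - J) = 1 ∧ enorm2 (J - Q) = 1} = {X, Y} := by
  obtain ⟨p1, p2⟩ := P
  obtain ⟨q1, q2⟩ := Q
  simp only at h0 h4 ⊢
  have hD0 : 0 < (q1 - p1) ^ 2 + (q2 - p2) ^ 2 := by nlinarith [h0]
  have hD4 : (q1 - p1) ^ 2 + (q2 - p2) ^ 2 < 4 := by nlinarith [h4]
  have hDne : (q1 - p1) ^ 2 + (q2 - p2) ^ 2 ≠ 0 := ne_of_gt hD0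
  have hfrac : 0 < (4 - ((q1 - p1) ^ 2 + (q2 - p2) ^ 2)) / (4 * ((q1 - p1) ^ 2 + (q2 - p2) ^ 2)) :=
    div_pos (by linarith) (by positivity)
  set t := Real.sqrt ((4 - ((q1 - p1) ^ 2 + (q2 - p2) ^ 2)) /
    (4 * ((q1 - p1) ^ 2 + (q2 - p2) ^ 2))) with htdef
  have htpos : 0 < t := Real.sqrt_pos.2 hfrac
  have htsq : t ^ 2 = (4 - ((q1 - p1) ^ 2 + (q2 - p2) ^ 2)) /
      (4 * ((q1 - p1) ^ 2 + (q2 - p2) ^ 2)) := Real.sq_sqrt (le_of_lt hfrac)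
  have ht : ((q1 - p1) ^ 2 + (q2 - p2) ^ 2) * t ^ 2
      = (4 - ((q1 - p1) ^ 2 + (q2 - p2) ^ 2)) / 4 := by
    rw [htsq]; field_simp
  refine ⟨(p1 + ((q1 - p1) / 2 - (q2 - p2) * t), p2 + ((q2 - p2) / 2 + (q1 - p1) * t)),
          (p1 + ((q1 - p1) / 2 + (q2 - p2) * t), p2 + ((q2 - p2) / 2 - (q1 - p1) * t)),
          ?_, ?_⟩
  · intro hXY
    rw [Prod.ext_iff] at hXY
    obtain ⟨hx, hy⟩ := hXY
    simp only at hx hy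
    have hb0 : (q2 - p2) * t = 0 := by linarith
    have ha0 : (q1 - p1) * t = 0 := by linarith
    have hb' : q2 - p2 = 0 := by
      rcases mul_eq_zero.1 hb0 with h' | h'
      · exact h'
      · exact absurd h' (ne_of_gt htpos)
    have ha' : q1 - p1 = 0 := by
      rcases mul_eq_zero.1 ha0 with h' | h'
      · exact h'
      · exact absurd h' (ne_of_gt htpos)
    rw [ha', hb'] at hD0
    norm_num at hD0
  · ext J
    obtain ⟨j1, j2⟩ := J
    simp only [Set.mem_setOf_eq, Set.mem_insert_iff, Set.mem_singleton_iff, enorm2_eq_one,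
      Prod.fst_sub, Prod.snd_sub, Prod.ext_iff]
    have key := circle_sols (q1 - p1) (q2 - p2) t (j1 - p1) (j2 - p2) hD0 ht
    constructor
    · rintro ⟨e1, e2⟩
      have e1' : (j1 - p1) ^ 2 + (j2 - p2) ^ 2 = 1 := by linear_combination e1
      have e2' : (j1 - p1 - (q1 - p1)) ^ 2 + (j2 - p2 - (q2 - p2)) ^ 2 = 1 := by
        linear_combination e2
      rcases key.1 ⟨e1', e2'⟩ with ⟨c1, c2⟩ | ⟨c1, c2⟩
      · left; exact ⟨by linarith, by linarith⟩
      · right; exact ⟨by linarith, by linarith⟩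
    · rintro (⟨h1, h2⟩ | ⟨h1, h2⟩)
      · have := key.2 (Or.inl ⟨by rw [h1]; ring, by rw [h2]; ring⟩)
        exact ⟨by linear_combination this.1, by linear_combination this.2⟩
      · have := key.2 (Or.inr ⟨by rw [h1]; ring, by rw [h2]; ring⟩)
        exact ⟨by linear_combination this.1, by linear_combination this.2⟩

lemma cos_mono_aux (n : ℕ) (hn : 0 < n) (r s : ℕ) (hrs : r ≤ s) (hs : s ≤ 2 * n) :
    Real.cos ((s:ℝ) * (π / (2 * n))) ≤ Real.cos ((r:ℝ) * (π / (2 * n))) := by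
  have hnR : (0:ℝ) < n := by exact_mod_cast hn
  apply Real.cos_le_cos_of_nonneg_of_le_pi
  · positivity
  · have h1 : (s:ℝ) * (π / (2 * n)) ≤ (2 * n) * (π / (2 * n)) := by
      apply mul_le_mul_of_nonneg_right
      · exact_mod_cast hs
      · positivity
    have h2 : (2 * (n:ℝ)) * (π / (2 * n)) = π := by field_simp
    linarith
  · apply mul_le_mul_of_nonneg_right
    · exact_mod_cast hrs
    · positivity

lemma cos_reduce (n : ℕ) (hn : 0 < n) (q : ℤ) :
    ∃ r : ℕ, r ≤ 2 * n ∧ ((q - r) % 4 = 0 ∨ (q + r) % 4 = 0) ∧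
      Real.cos (q * (π / (2 * n))) = Real.cos (r * (π / (2 * n))) := by
  have hnR : (0:ℝ) < n := by exact_mod_cast hn
  have h4n : (0:ℤ) < 4 * n := by positivity
  have hfull : (4 * (n:ℝ)) * (π / (2 * n)) = 2 * π := by field_simp; ring
  set q' : ℤ := q % (4 * n) with hq'def
  have hq'0 : 0 ≤ q' := Int.emod_nonneg q (ne_of_gt h4n)
  have hq'lt : q' < 4 * n := Int.emod_lt_of_pos q h4n
  have hdiv : 4 * (n:ℤ) * (q / (4 * n)) + q' = q := by
    rw [hq'def]; linarith [Int.mul_ediv_add_emod q (4 * n)]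
  have hdvd : (4:ℤ) ∣ (q - q') := ⟨(n:ℤ) * (q / (4 * n)), by linarith [hdiv]⟩
  have hcos0 : Real.cos (q * (π / (2 * n))) = Real.cos (q' * (π / (2 * n))) := by
    have hq : (q:ℝ) = (q':ℝ) + 4 * n * ((q / (4 * n) : ℤ) : ℝ) := by
      have hc := congrArg (Int.cast : ℤ → ℝ) hdiv
      push_cast at hc
      linarith [hc]
    have harg : (q:ℝ) * (π / (2 * n)) = q' * (π / (2 * n)) + (q / (4 * n) : ℤ) * (2 * π) := by
      rw [hq, ← hfull]; ring
    rw [harg, Real.cos_add_int_mul_two_pi]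
  by_cases hle : q' ≤ 2 * n
  · refine ⟨q'.toNat, by omega, Or.inl ?_, ?_⟩
    · have h' : (q'.toNat : ℤ) = q' := Int.toNat_of_nonneg hq'0
      rw [h']; omega
    · rw [hcos0]
      have h' : ((q'.toNat : ℕ) : ℝ) = (q' : ℝ) := by exact_mod_cast Int.toNat_of_nonneg hq'0
      rw [h']
  · refine ⟨(4 * n - q').toNat, by omega, Or.inr ?_, ?_⟩
    · have h' : ((4 * n - q').toNat : ℤ) = 4 * n - q' := Int.toNat_of_nonneg (by omega)
      rw [h']; omega
    · rw [hcos0]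
      have h' : (((4 * n - q').toNat : ℕ) : ℝ) = 4 * (n:ℝ) - q' := by
        have := Int.toNat_of_nonneg (show (0:ℤ) ≤ 4 * n - q' by omega)
        exact_mod_cast this
      rw [h']
      have harg : ((4:ℝ) * n - q') * (π / (2 * n)) = 2 * π - q' * (π / (2 * n)) := by
        rw [← hfull]; ring
      rw [harg, Real.cos_two_pi_sub]

lemma cos_le_of_odd (n : ℕ) (hn : 0 < n) (q : ℤ) (hq : q % 2 = 1) :
    Real.cos (q * (π / (2 * n))) ≤ Real.cos (π / (2 * n)) := by
  obtain ⟨r, hr2n, hmod, hcos⟩ := cos_reduce n hn q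
  have hr1 : 1 ≤ r := by omega
  rw [hcos]
  have := cos_mono_aux n hn 1 r hr1 hr2n
  simpa using this

lemma cos_le_of_two_mod_four (n : ℕ) (hn : 0 < n) (q : ℤ) (hq : q % 4 = 2) :
    Real.cos (q * (π / (2 * n))) ≤ Real.cos (2 * (π / (2 * n))) := by
  obtain ⟨r, hr2n, hmod, hcos⟩ := cos_reduce n hn q
  have hr2 : 2 ≤ r := by omega
  rw [hcos]
  have := cos_mono_aux n hn 2 r hr2 hr2n
  simpa using this

lemma cos_ge_of_zero_mod_four (n : ℕ) (hodd : Odd n) (q : ℤ) (hq : q % 4 = 0) :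
    -Real.cos (2 * (π / (2 * n))) ≤ Real.cos (q * (π / (2 * n))) := by
  obtain ⟨l, hl⟩ := hodd
  have hn : 0 < n := by omega
  have hnR : (0:ℝ) < n := by exact_mod_cast hn
  obtain ⟨r, hr2n, hmod, hcos⟩ := cos_reduce n hn q
  have hrle : r ≤ 2 * n - 2 := by omega
  rw [hcos]
  have hkey : -Real.cos (2 * (π / (2 * n))) = Real.cos (((2 * n - 2 : ℕ) : ℝ) * (π / (2 * n))) := by
    have hcast : ((2 * n - 2 : ℕ) : ℝ) = 2 * n - 2 := by
      have h2n : 2 ≤ 2 * n := by omega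
      push_cast [Nat.cast_sub h2n]
      ring
    rw [hcast]
    have harg : ((2:ℝ) * n - 2) * (π / (2 * n)) = π - 2 * (π / (2 * n)) := by
      field_simp
    rw [harg, Real.cos_pi_sub]
  rw [hkey]
  exact cos_mono_aux n hn r (2 * n - 2) hrle (by omega)

lemma mysin_3pi2_add (x : ℝ) : Real.sin (3 * π / 2 + x) = -Real.cos x := by
  rw [show 3 * π / 2 + x = π + π / 2 + x by ring]
  simp [Real.sin_add, Real.cos_add]

lemma mysin_3pi2_sub (x : ℝ) : Real.sin (3 * π / 2 - x) = -Real.cos x := by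
  rw [show 3 * π / 2 - x = π + π / 2 + -x by ring]
  simp [Real.sin_add, Real.cos_add]

lemma mycos_sub_3pi2 (x : ℝ) : Real.cos (x - 3 * π / 2) = -Real.sin x := by
  rw [show x - 3 * π / 2 = x - π - π / 2 by ring]
  simp [Real.cos_sub, Real.sin_sub]

lemma mysin_pi2_add (x : ℝ) : Real.sin (π / 2 + x) = Real.cos x := by
  simp [Real.sin_add]

lemma mycos_sub_pi2 (x : ℝ) : Real.cos (x - π / 2) = Real.sin x := by
  rw [show x - π / 2 = -(π / 2 - x) by ring, Real.cos_neg, Real.cos_pi_div_two_sub]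

lemma mycosc_pos (n : ℕ) (hn : 2 ≤ n) : 0 < Real.cos (π / (2 * n)) := by
  have hnR : (2:ℝ) ≤ n := by exact_mod_cast hn
  apply Real.cos_pos_of_mem_Ioo
  constructor
  · have h1 : (0:ℝ) < π / (2 * n) := by positivity
    linarith [Real.pi_pos]
  · have h1 : π / (2 * n) ≤ π / (2 * 2) := by
      apply div_le_div_of_nonneg_left Real.pi_pos.le (by norm_num)
      linarith
    linarith [Real.pi_pos]

lemma pole_exists (n : ℕ) (hn3 : 3 ≤ n) (hodd : Odd n) (σ : ℤ) (hσ : σ = 1 ∨ σ = -1) :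
    ∃ k₀ : Fin n, ∃ ε : ℤ, (ε = 1 ∨ ε = -1) ∧ 4 * (k₀.val : ℤ) = (2 + σ) * n + ε := by
  obtain ⟨l, hl⟩ := hodd
  have hmod : n % 4 = 1 ∨ n % 4 = 3 := by omega
  rcases hσ with hσ | hσ <;> subst hσ <;> rcases hmod with hm | hm
  · exact ⟨⟨(3 * n + 1) / 4, by omega⟩, 1, Or.inl rfl, by simp; omega⟩
  · exact ⟨⟨(3 * n - 1) / 4, by omega⟩, -1, Or.inr rfl, by simp; omega⟩
  · exact ⟨⟨(n - 1) / 4, by omega⟩, -1, Or.inr rfl, by simp; omega⟩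
  · exact ⟨⟨(n + 1) / 4, by omega⟩, 1, Or.inl rfl, by simp; omega⟩

lemma pole_prop (n : ℕ) (hn3 : 3 ≤ n) (hodd : Odd n) (k₀ : Fin n) (ε σ : ℤ)
    (hε : ε = 1 ∨ ε = -1) (hσ : σ = 1 ∨ σ = -1)
    (hk : 4 * (k₀.val : ℤ) = (2 + σ) * n + ε) (j : Fin n) :
    1 - Real.cos (2 * (j.val : ℝ) * π / n - 2 * (k₀.val : ℝ) * π / n)
      ≤ 2 * Real.cos (π / (2 * n)) *
        ((σ:ℝ) * Real.sin (2 * (j.val : ℝ) * π / n)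
          - (σ:ℝ) * Real.sin (2 * (k₀.val : ℝ) * π / n)) := by
  have hn : 0 < n := by omega
  have hnR : (0:ℝ) < n := by exact_mod_cast hn
  have hnne : (n:ℝ) ≠ 0 := ne_of_gt hnR
  have hnc : (n:ℝ) * (π / (2 * n)) = π / 2 := by field_simp
  have hθj : 2 * (j.val : ℝ) * π / n = 4 * (j.val : ℝ) * (π / (2 * n)) := by
    field_simp; ring
  have hθk : 2 * (k₀.val : ℝ) * π / n = 4 * (k₀.val : ℝ) * (π / (2 * n)) := by
    field_simp; ring
  rw [hθj, hθk]
  have hq4 : (4 * (j.val:ℤ) - 4 * (k₀.val:ℤ) + 2 * ε) % 4 = 2 := by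
    rcases hε with h | h <;> subst h <;> omega
  have hbound := cos_le_of_two_mod_four n hn (4 * (j.val:ℤ) - 4 * (k₀.val:ℤ) + 2 * ε) hq4
  have hkR : (k₀.val:ℝ) * 4 = (2 + (σ:ℝ)) * n + (ε:ℝ) := by
    have := congrArg (Int.cast : ℤ → ℝ) hk
    push_cast at this
    linarith [this]
  have hcos2 : Real.cos (2 * (π / (2 * n))) = 2 * Real.cos (π / (2 * n)) ^ 2 - 1 :=
    Real.cos_two_mul _
  have hid : ∀ m : ℝ, Real.sin ((m - 1) * (π / (2 * n))) + Real.sin ((m + 1) * (π / (2 * n)))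
      = 2 * Real.sin (m * (π / (2 * n))) * Real.cos (π / (2 * n)) := by
    intro m
    rw [show (m - 1) * (π / (2 * n)) = m * (π / (2 * n)) - π / (2 * n) by ring,
        show (m + 1) * (π / (2 * n)) = m * (π / (2 * n)) + π / (2 * n) by ring,
        Real.sin_add, Real.sin_sub]
    ring
  rcases hσ with hσ | hσ <;> subst hσ <;> rcases hε with hε | hε <;> subst hε <;>
    push_cast at hkR hbound ⊢
  · -- σ = 1, ε = 1 : 4k₀ = 3n+1
    have h4k : 4 * (k₀.val:ℝ) = 3 * (n:ℝ) + 1 := by linarith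
    have hA : 4 * (k₀.val:ℝ) * (π / (2 * n)) = 3 * π / 2 + π / (2 * n) := by
      linear_combination (π / (2 * n)) * h4k + 3 * hnc
    have hsk : Real.sin (4 * (k₀.val:ℝ) * (π / (2 * n))) = -Real.cos (π / (2 * n)) := by
      rw [hA]; exact mysin_3pi2_add _
    have hca : 4 * (j.val:ℝ) * (π / (2 * n)) - 4 * (k₀.val:ℝ) * (π / (2 * n))
        = (4 * (j.val:ℝ) - 1) * (π / (2 * n)) - 3 * π / 2 := by
      linear_combination -hA
    have harg : (4 * (j.val:ℝ) - 4 * (k₀.val:ℝ) + 2) * (π / (2 * n))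
        = (4 * (j.val:ℝ) + 1) * (π / (2 * n)) - 3 * π / 2 := by
      linear_combination -hA
    rw [harg, mycos_sub_3pi2, hcos2] at hbound
    rw [hca, mycos_sub_3pi2, hsk]
    linarith [hbound, hid (4 * (j.val:ℝ))]
  · -- σ = 1, ε = -1 : 4k₀ = 3n-1
    have h4k : 4 * (k₀.val:ℝ) = 3 * (n:ℝ) - 1 := by linarith
    have hA : 4 * (k₀.val:ℝ) * (π / (2 * n)) = 3 * π / 2 - π / (2 * n) := by
      linear_combination (π / (2 * n)) * h4k + 3 * hnc
    have hsk : Real.sin (4 * (k₀.val:ℝ) * (π / (2 * n))) = -Real.cos (π / (2 * n)) := by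
      rw [hA]; exact mysin_3pi2_sub _
    have hca : 4 * (j.val:ℝ) * (π / (2 * n)) - 4 * (k₀.val:ℝ) * (π / (2 * n))
        = (4 * (j.val:ℝ) + 1) * (π / (2 * n)) - 3 * π / 2 := by
      linear_combination -hA
    have harg : (4 * (j.val:ℝ) - 4 * (k₀.val:ℝ) + -2) * (π / (2 * n))
        = (4 * (j.val:ℝ) - 1) * (π / (2 * n)) - 3 * π / 2 := by
      linear_combination -hA
    rw [harg, mycos_sub_3pi2, hcos2] at hbound
    rw [hca, mycos_sub_3pi2, hsk]
    linarith [hbound, hid (4 * (j.val:ℝ))]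
  · -- σ = -1, ε = 1 : 4k₀ = n+1
    have h4k : 4 * (k₀.val:ℝ) = (n:ℝ) + 1 := by linarith
    have hA : 4 * (k₀.val:ℝ) * (π / (2 * n)) = π / 2 + π / (2 * n) := by
      linear_combination (π / (2 * n)) * h4k + hnc
    have hsk : Real.sin (4 * (k₀.val:ℝ) * (π / (2 * n))) = Real.cos (π / (2 * n)) := by
      rw [hA]; exact mysin_pi2_add _
    have hca : 4 * (j.val:ℝ) * (π / (2 * n)) - 4 * (k₀.val:ℝ) * (π / (2 * n))
        = (4 * (j.val:ℝ) - 1) * (π / (2 * n)) - π / 2 := by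
      linear_combination -hA
    have harg : (4 * (j.val:ℝ) - 4 * (k₀.val:ℝ) + 2) * (π / (2 * n))
        = (4 * (j.val:ℝ) + 1) * (π / (2 * n)) - π / 2 := by
      linear_combination -hA
    rw [harg, mycos_sub_pi2, hcos2] at hbound
    rw [hca, mycos_sub_pi2, hsk]
    linarith [hbound, hid (4 * (j.val:ℝ))]
  · -- σ = -1, ε = -1 : 4k₀ = n-1
    have h4k : 4 * (k₀.val:ℝ) = (n:ℝ) - 1 := by linarith
    have hA : 4 * (k₀.val:ℝ) * (π / (2 * n)) = π / 2 - π / (2 * n) := by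
      linear_combination (π / (2 * n)) * h4k + hnc
    have hsk : Real.sin (4 * (k₀.val:ℝ) * (π / (2 * n))) = Real.cos (π / (2 * n)) := by
      rw [hA, Real.sin_pi_div_two_sub]
    have hca : 4 * (j.val:ℝ) * (π / (2 * n)) - 4 * (k₀.val:ℝ) * (π / (2 * n))
        = (4 * (j.val:ℝ) + 1) * (π / (2 * n)) - π / 2 := by
      linear_combination -hA
    have harg : (4 * (j.val:ℝ) - 4 * (k₀.val:ℝ) + -2) * (π / (2 * n))
        = (4 * (j.val:ℝ) - 1) * (π / (2 * n)) - π / 2 := by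
      linear_combination -hA
    rw [harg, mycos_sub_pi2, hcos2] at hbound
    rw [hca, mycos_sub_pi2, hsk]
    linarith [hbound, hid (4 * (j.val:ℝ))]

/-- The k-th fixed endpoint `B_k = (R cos(2kπ/n), R sin(2kπ/n))` (indices from 0). -/
noncomputable def Bpt (n : ℕ) (R : ℝ) (k : Fin n) : ℝ × ℝ :=
  (R * Real.cos (2 * (k.val : ℝ) * Real.pi / (n : ℝ)),
   R * Real.sin (2 * (k.val : ℝ) * Real.pi / (n : ℝ)))

lemma Bdist (n : ℕ) (R : ℝ) (j k : Fin n) :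
    ((Bpt n R j).1 - (Bpt n R k).1) ^ 2 + ((Bpt n R j).2 - (Bpt n R k).2) ^ 2
      = R ^ 2 * (2 - 2 * Real.cos (2 * (j.val : ℝ) * π / n - 2 * (k.val : ℝ) * π / n)) := by
  simp only [Bpt]
  rw [Real.cos_sub]
  linear_combination R ^ 2 * (Real.sin_sq_add_cos_sq (2 * (j.val : ℝ) * π / n))
    + R ^ 2 * (Real.sin_sq_add_cos_sq (2 * (k.val : ℝ) * π / n))

lemma Bclose (n : ℕ) (hn3 : 3 ≤ n) (hodd : Odd n) (R : ℝ) (hR0 : 0 < R)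
    (hRc : R * Real.cos (π / (2 * n)) < 1) (j k : Fin n) :
    ((Bpt n R j).1 - (Bpt n R k).1) ^ 2 + ((Bpt n R j).2 - (Bpt n R k).2) ^ 2 < 4 := by
  have hn : 0 < n := by omega
  have hnR : (0:ℝ) < n := by exact_mod_cast hn
  have hcosc := mycosc_pos n (by omega)
  rw [Bdist]
  have hq : (4 * (j.val:ℤ) - 4 * (k.val:ℤ)) % 4 = 0 := by omega
  have hge := cos_ge_of_zero_mod_four n hodd (4 * (j.val:ℤ) - 4 * (k.val:ℤ)) hq
  have harg : ((4 * (j.val:ℤ) - 4 * (k.val:ℤ) : ℤ) : ℝ) * (π / (2 * n))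
      = 2 * (j.val : ℝ) * π / n - 2 * (k.val : ℝ) * π / n := by
    push_cast
    field_simp
    ring
  rw [harg] at hge
  have hcos2 : Real.cos (2 * (π / (2 * n))) = 2 * Real.cos (π / (2 * n)) ^ 2 - 1 :=
    Real.cos_two_mul _
  have h1 : 0 ≤ R * Real.cos (π / (2 * n)) := by positivity
  have hsq : (R * Real.cos (π / (2 * n))) ^ 2 < 1 := by nlinarith [hRc, h1]
  have hb : 2 - 2 * Real.cos (2 * (j.val : ℝ) * π / n - 2 * (k.val : ℝ) * π / n)
      ≤ 4 * Real.cos (π / (2 * n)) ^ 2 := by linarith [hge, hcos2]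
  have hc2 : R ^ 2 * (2 - 2 * Real.cos (2 * (j.val : ℝ) * π / n - 2 * (k.val : ℝ) * π / n))
      ≤ R ^ 2 * (4 * Real.cos (π / (2 * n)) ^ 2) := by
    apply mul_le_mul_of_nonneg_left hb (sq_nonneg R)
  nlinarith [hsq, hc2]

lemma Bpt_inj (n : ℕ) (hn : 0 < n) (R : ℝ) (hR0 : 0 < R) (j k : Fin n)
    (h1 : (Bpt n R j).1 = (Bpt n R k).1) (h2 : (Bpt n R j).2 = (Bpt n R k).2) : j = k := by
  have hnR : (0:ℝ) < n := by exact_mod_cast hn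
  simp only [Bpt] at h1 h2
  have hc : Real.cos (2 * (j.val : ℝ) * π / n) = Real.cos (2 * (k.val : ℝ) * π / n) :=
    mul_left_cancel₀ (ne_of_gt hR0) h1
  have hs : Real.sin (2 * (j.val : ℝ) * π / n) = Real.sin (2 * (k.val : ℝ) * π / n) :=
    mul_left_cancel₀ (ne_of_gt hR0) h2
  have hone : Real.cos (2 * (j.val : ℝ) * π / n - 2 * (k.val : ℝ) * π / n) = 1 := by
    rw [Real.cos_sub, hc, hs]
    linear_combination Real.sin_sq_add_cos_sq (2 * (k.val : ℝ) * π / n)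
  obtain ⟨m, hm⟩ := (Real.cos_eq_one_iff _).1 hone
  have hmn : (m : ℝ) * n = (j.val : ℝ) - (k.val : ℝ) := by
    have hpi := Real.pi_ne_zero
    field_simp at hm
    apply mul_right_cancel₀ (b := 2 * π) (by positivity)
    ring_nf
    ring_nf at hm
    linear_combination (2 * π) * hm
  have hmn' : m * n = (j.val : ℤ) - (k.val : ℤ) := by exact_mod_cast hmn
  have hj := j.isLt
  have hk := k.isLt
  have hj := j.isLt
  have hk := k.isLt
  have hb1 : (j.val:ℤ) - k.val < n := by omega
  have hb2 : -(n:ℤ) < (j.val:ℤ) - k.val := by omega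
  have hm0 : m = 0 := by
    rcases lt_trichotomy m 0 with h | h | h
    · have hle : m ≤ -1 := by omega
      have hmul : m * n ≤ -1 * n := mul_le_mul_of_nonneg_right hle (by omega)
      exfalso; linarith [hmn', hb2, hmul]
    · exact h
    · have hle : 1 ≤ m := by omega
      have hmul : 1 * n ≤ m * n := mul_le_mul_of_nonneg_right hle (by omega)
      exfalso; linarith [hmn', hb1, hmul]
  rw [hm0, zero_mul] at hmn'
  have : j.val = k.val := by omega
  exact Fin.ext this

lemma reach (C J B : ℝ × ℝ) (h1 : enorm2 (C - J) = 1) (h2 : enorm2 (J - B) = 1) :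
    (C.1 - B.1) ^ 2 + (C.2 - B.2) ^ 2 ≤ 4 := by
  rw [enorm2_eq_one] at h1 h2
  simp only [Prod.fst_sub, Prod.snd_sub] at h1 h2
  nlinarith [sq_nonneg ((C.1 - J.1) - (J.1 - B.1)), sq_nonneg ((C.2 - J.2) - (J.2 - B.2))]

lemma stretch (u w : ℝ × ℝ) (s : ℝ) (hs : s = 1 ∨ s = -1)
    (hu : u.1 ^ 2 + u.2 ^ 2 = 1) (hw : w.1 ^ 2 + w.2 ^ 2 = 1)
    (hsum1 : u.1 + w.1 = 0) (hsum2 : u.2 + w.2 = 2 * s) :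
    u = (0, s) ∧ w = (0, s) := by
  have hs2 : s ^ 2 = 1 := by rcases hs with h | h <;> rw [h] <;> norm_num
  have hsne : s ≠ 0 := by rcases hs with h | h <;> rw [h] <;> norm_num
  have h11 : u.1 ^ 2 = w.1 ^ 2 := by linear_combination (u.1 - w.1) * hsum1
  have hsq : u.2 ^ 2 = w.2 ^ 2 := by linarith [hu, hw, h11]
  have hfac : (u.2 - w.2) * (u.2 + w.2) = 0 := by linear_combination hsq
  rcases mul_eq_zero.1 hfac with hd | hd
  · have hu2 : u.2 = s := by linarith
    have hw2 : w.2 = s := by linarith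
    have hu1 : u.1 = 0 := by
      have h22 : u.2 ^ 2 = 1 := by rw [hu2]; exact hs2
      have : u.1 ^ 2 = 0 := by linarith [hu, h22]
      exact pow_eq_zero_iff (by norm_num) |>.1 this
    have hw1 : w.1 = 0 := by linarith
    exact ⟨Prod.ext hu1 hu2, Prod.ext hw1 hw2⟩
  · exfalso
    have : s = 0 := by linarith
    exact hsne this

/-- The configuration space `M_n(R)` of spiders with `n` arms of radius `R`,
as a subset of `(ℝ²)^{n+1} ≅ ℝ^{2n+2}`: a pair `(C, J)` with
`|C − J_k| = 1` and `|J_k − B_k| = 1` for all `k`. -/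
noncomputable def MSpace (n : ℕ) (R : ℝ) : Set ((ℝ × ℝ) × (Fin n → ℝ × ℝ)) :=
  {x | ∀ k : Fin n, enorm2 (x.1 - x.2 k) = 1 ∧ enorm2 (x.2 k - Bpt n R k) = 1}

lemma half (n : ℕ) (hn3 : 3 ≤ n) (hodd : Odd n) (R : ℝ) (hR0 : 0 < R)
    (hRc : R * Real.cos (π / (2 * n)) < 1)
    (s : ℝ) (σ ε : ℤ) (hσs : (σ:ℝ) = s) (hσ : σ = 1 ∨ σ = -1) (hε : ε = 1 ∨ ε = -1)
    (k₀ : Fin n) (hk : 4 * (k₀.val : ℤ) = (2 + σ) * n + ε) :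
    {x ∈ MSpace n R | ∃ k : Fin n, x.1 - x.2 k = x.2 k - Bpt n R k
        ∧ x.1 - x.2 k = ((0:ℝ), s)}.Finite ∧
    {x ∈ MSpace n R | ∃ k : Fin n, x.1 - x.2 k = x.2 k - Bpt n R k
        ∧ x.1 - x.2 k = ((0:ℝ), s)}.ncard = 2 ^ (n - 1) ∧
    ∀ x ∈ {x ∈ MSpace n R | ∃ k : Fin n, x.1 - x.2 k = x.2 k - Bpt n R k
        ∧ x.1 - x.2 k = ((0:ℝ), s)},
      x.1 = ((Bpt n R k₀).1, (Bpt n R k₀).2 + 2 * s) := by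
  have hn : 0 < n := by omega
  have hnR : (0:ℝ) < n := by exact_mod_cast hn
  have hcosc := mycosc_pos n (by omega)
  have hs : s = 1 ∨ s = -1 := by
    rcases hσ with h | h <;> [left; right] <;> rw [← hσs, h] <;> norm_num
  have hs2 : s ^ 2 = 1 := by rcases hs with h | h <;> rw [h] <;> norm_num
  have hpole : ∀ j : Fin n,
      1 - Real.cos (2 * (j.val : ℝ) * π / n - 2 * (k₀.val : ℝ) * π / n)
        ≤ 2 * Real.cos (π / (2 * n)) *
          (s * Real.sin (2 * (j.val : ℝ) * π / n)
            - s * Real.sin (2 * (k₀.val : ℝ) * π / n)) := by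
    intro j
    have := pole_prop n hn3 hodd k₀ ε σ hε hσ hk j
    rw [hσs] at this
    exact this
  have hmin : ∀ j : Fin n, 0 ≤ s * Real.sin (2 * (j.val : ℝ) * π / n)
      - s * Real.sin (2 * (k₀.val : ℝ) * π / n) := by
    intro j
    have h1 := hpole j
    have h2 := Real.cos_le_one (2 * (j.val : ℝ) * π / n - 2 * (k₀.val : ℝ) * π / n)
    nlinarith [h1, h2, hcosc]
  set C : ℝ × ℝ := ((Bpt n R k₀).1, (Bpt n R k₀).2 + 2 * s) with hCdef
  set T : Fin n → Set (ℝ × ℝ) :=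
    fun j => {J | enorm2 (C - J) = 1 ∧ enorm2 (J - Bpt n R j) = 1} with hTdef
  -- representation of the set
  have hrep : {x ∈ MSpace n R | ∃ k : Fin n, x.1 - x.2 k = x.2 k - Bpt n R k
        ∧ x.1 - x.2 k = ((0:ℝ), s)}
      = {x : (ℝ × ℝ) × (Fin n → ℝ × ℝ) | x.1 = C ∧ ∀ j, x.2 j ∈ T j} := by
    ext x
    simp only [Set.mem_setOf_eq, Set.mem_sep_iff]
    constructor
    · rintro ⟨hM, k, hstr, hdir⟩
      rw [Prod.ext_iff] at hstr hdir
      simp only [Prod.fst_sub, Prod.snd_sub] at hstr hdir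
      -- x.1 = Bpt k + (0, 2s)
      have hx1 : x.1.1 = (Bpt n R k).1 := by
        have := hstr.1; have := hdir.1; linarith [hstr.1, hdir.1]
      have hx2 : x.1.2 = (Bpt n R k).2 + 2 * s := by linarith [hstr.2, hdir.2]
      -- k = k₀
      have hre := reach x.1 (x.2 k₀) (Bpt n R k₀) (hM k₀).1 (hM k₀).2
      rw [hx1, hx2] at hre
      have hd := Bdist n R k k₀
      have hm := hmin k
      have hb2 : (Bpt n R k).2 - (Bpt n R k₀).2
          = R * Real.sin (2 * (k.val : ℝ) * π / n)
            - R * Real.sin (2 * (k₀.val : ℝ) * π / n) := by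
        simp [Bpt]
      have hsb : s * ((Bpt n R k).2 - (Bpt n R k₀).2)
          = R * (s * Real.sin (2 * (k.val : ℝ) * π / n)
            - s * Real.sin (2 * (k₀.val : ℝ) * π / n)) := by rw [hb2]; ring
      have hRX : 0 ≤ R * (s * Real.sin (2 * (k.val : ℝ) * π / n)
            - s * Real.sin (2 * (k₀.val : ℝ) * π / n)) := mul_nonneg (le_of_lt hR0) hm
      have hdist0 : ((Bpt n R k).1 - (Bpt n R k₀).1) ^ 2
          + ((Bpt n R k).2 - (Bpt n R k₀).2) ^ 2 ≤ 0 := by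
        nlinarith [hre, hs2, hsb, hRX]
      have ha2 : ((Bpt n R k).1 - (Bpt n R k₀).1) ^ 2 = 0 :=
        le_antisymm (by linarith [hdist0, sq_nonneg ((Bpt n R k).2 - (Bpt n R k₀).2)])
          (sq_nonneg _)
      have hb2' : ((Bpt n R k).2 - (Bpt n R k₀).2) ^ 2 = 0 :=
        le_antisymm (by linarith [hdist0, sq_nonneg ((Bpt n R k).1 - (Bpt n R k₀).1)])
          (sq_nonneg _)
      have hc1 : (Bpt n R k).1 = (Bpt n R k₀).1 := by
        have := pow_eq_zero_iff (n := 2) (by norm_num) |>.1 ha2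
        linarith
      have hc2 : (Bpt n R k).2 = (Bpt n R k₀).2 := by
        have := pow_eq_zero_iff (n := 2) (by norm_num) |>.1 hb2'
        linarith
      have hkk₀ : k = k₀ := Bpt_inj n hn R hR0 k k₀ hc1 hc2
      subst hkk₀
      have hxC : x.1 = C := by
        rw [hCdef]; exact Prod.ext hx1 hx2
      refine ⟨hxC, fun j => ?_⟩
      rw [hTdef]
      refine ⟨?_, (hM j).2⟩
      rw [← hxC]
      exact (hM j).1
    · rintro ⟨hC1, hT1⟩
      have hM : x ∈ MSpace n R := by
        intro j
        have := hT1 j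
        rw [hTdef] at this
        exact ⟨by rw [hC1]; exact this.1, this.2⟩
      refine ⟨hM, k₀, ?_, ?_⟩
      · -- stretched
        have h1 := (hM k₀).1
        have h2 := (hM k₀).2
        rw [enorm2_eq_one] at h1 h2
        simp only [Prod.fst_sub, Prod.snd_sub] at h1 h2
        have hsum1 : (x.1 - x.2 k₀).1 + (x.2 k₀ - Bpt n R k₀).1 = 0 := by
          simp only [Prod.fst_sub]
          have : x.1.1 = (Bpt n R k₀).1 := by rw [hC1]
          linarith [this]
        have hsum2 : (x.1 - x.2 k₀).2 + (x.2 k₀ - Bpt n R k₀).2 = 2 * s := by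
          simp only [Prod.snd_sub]
          have : x.1.2 = (Bpt n R k₀).2 + 2 * s := by rw [hC1]
          linarith [this]
        have := stretch (x.1 - x.2 k₀) (x.2 k₀ - Bpt n R k₀) s hs
          (by simpa using h1) (by simpa using h2)
          (by simpa using hsum1) (by simpa using hsum2)
        rw [this.1, this.2]
      · have h1 := (hM k₀).1
        have h2 := (hM k₀).2
        rw [enorm2_eq_one] at h1 h2
        have hsum1 : (x.1 - x.2 k₀).1 + (x.2 k₀ - Bpt n R k₀).1 = 0 := by
          simp only [Prod.fst_sub]
          have : x.1.1 = (Bpt n R k₀).1 := by rw [hC1]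
          linarith [this]
        have hsum2 : (x.1 - x.2 k₀).2 + (x.2 k₀ - Bpt n R k₀).2 = 2 * s := by
          simp only [Prod.snd_sub]
          have : x.1.2 = (Bpt n R k₀).2 + 2 * s := by rw [hC1]
          linarith [this]
        exact (stretch (x.1 - x.2 k₀) (x.2 k₀ - Bpt n R k₀) s hs
          (by simpa using h1) (by simpa using h2)
          (by simpa using hsum1) (by simpa using hsum2)).1
  -- analysis of T j
  have hTk₀ : T k₀ = {((C.1 + (Bpt n R k₀).1) / 2, (C.2 + (Bpt n R k₀).2) / 2)} := by
    rw [hTdef]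
    apply circle_tangent
    rw [hCdef]
    simp only
    linear_combination 4 * hs2
  have hTj : ∀ j : Fin n, j ≠ k₀ → ∃ X Y : ℝ × ℝ, X ≠ Y ∧ T j = {X, Y} := by
    intro j hj
    rw [hTdef]
    apply circle_two
    · -- positive distance
      have hcl := Bclose n hn3 hodd R hR0 hRc k₀ j
      rw [hCdef]
      simp only
      nlinarith [hcl, hs2, sq_nonneg ((Bpt n R k₀).1 - (Bpt n R j).1),
        sq_nonneg ((Bpt n R k₀).2 - (Bpt n R j).2 + 2 * s),
        sq_nonneg (s * ((Bpt n R k₀).2 - (Bpt n R j).2) + 2)]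
    · -- distance < 2
      have hd := Bdist n R j k₀
      by_cases hcos1 : Real.cos (2 * (j.val : ℝ) * π / n - 2 * (k₀.val : ℝ) * π / n) = 1
      · exfalso
        rw [hcos1] at hd
        have hdist0 : ((Bpt n R j).1 - (Bpt n R k₀).1) ^ 2
            + ((Bpt n R j).2 - (Bpt n R k₀).2) ^ 2 ≤ 0 := by rw [hd]; ring_nf; norm_num
        have ha2 : ((Bpt n R j).1 - (Bpt n R k₀).1) ^ 2 = 0 :=
          le_antisymm (by linarith [hdist0, sq_nonneg ((Bpt n R j).2 - (Bpt n R k₀).2)])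
            (sq_nonneg _)
        have hb2' : ((Bpt n R j).2 - (Bpt n R k₀).2) ^ 2 = 0 :=
          le_antisymm (by linarith [hdist0, sq_nonneg ((Bpt n R j).1 - (Bpt n R k₀).1)])
            (sq_nonneg _)
        have hc1 : (Bpt n R j).1 = (Bpt n R k₀).1 := by
          have := pow_eq_zero_iff (n := 2) (by norm_num) |>.1 ha2
          linarith
        have hc2 : (Bpt n R j).2 = (Bpt n R k₀).2 := by
          have := pow_eq_zero_iff (n := 2) (by norm_num) |>.1 hb2'
          linarith
        exact hj (Bpt_inj n hn R hR0 j k₀ hc1 hc2)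
      · have hlt : Real.cos (2 * (j.val : ℝ) * π / n - 2 * (k₀.val : ℝ) * π / n) < 1 :=
          lt_of_le_of_ne (Real.cos_le_one _) hcos1
        have hXpos : 0 < s * Real.sin (2 * (j.val : ℝ) * π / n)
            - s * Real.sin (2 * (k₀.val : ℝ) * π / n) := by
          nlinarith [hpole j, hlt, hcosc]
        have hb2 : (Bpt n R k₀).2 - (Bpt n R j).2
            = R * Real.sin (2 * (k₀.val : ℝ) * π / n)
              - R * Real.sin (2 * (j.val : ℝ) * π / n) := by simp [Bpt]
        have h4RX : 0 < 4 * R * (s * Real.sin (2 * (j.val : ℝ) * π / n)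
            - s * Real.sin (2 * (k₀.val : ℝ) * π / n)) := by positivity
        have hchain1 : 2 * R ^ 2 *
            (1 - Real.cos (2 * (j.val : ℝ) * π / n - 2 * (k₀.val : ℝ) * π / n))
            ≤ 2 * R ^ 2 * (2 * Real.cos (π / (2 * n)) *
              (s * Real.sin (2 * (j.val : ℝ) * π / n)
                - s * Real.sin (2 * (k₀.val : ℝ) * π / n))) :=
          mul_le_mul_of_nonneg_left (hpole j) (by positivity)
        have hchain2 : R * Real.cos (π / (2 * n)) * (4 * R *
            (s * Real.sin (2 * (j.val : ℝ) * π / n)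
              - s * Real.sin (2 * (k₀.val : ℝ) * π / n)))
            < 1 * (4 * R * (s * Real.sin (2 * (j.val : ℝ) * π / n)
              - s * Real.sin (2 * (k₀.val : ℝ) * π / n))) :=
          mul_lt_mul_of_pos_right hRc h4RX
        have hsb : s * ((Bpt n R k₀).2 - (Bpt n R j).2)
            = -(R * (s * Real.sin (2 * (j.val : ℝ) * π / n)
              - s * Real.sin (2 * (k₀.val : ℝ) * π / n))) := by rw [hb2]; ring
        rw [hCdef]
        simp only
        nlinarith [hd, hchain1, hchain2, hsb, hs2]
  have hTfin : ∀ j : Fin n, (T j).Finite := by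
    intro j
    by_cases hj : j = k₀
    · rw [hj, hTk₀]; exact Set.finite_singleton _
    · obtain ⟨X, Y, _, hXY⟩ := hTj j hj
      rw [hXY]; exact (Set.finite_singleton Y).insert X
  have hTcard : ∀ j : Fin n, (T j).ncard = if j = k₀ then 1 else 2 := by
    intro j
    by_cases hj : j = k₀
    · rw [if_pos hj, hj, hTk₀, Set.ncard_singleton]
    · obtain ⟨X, Y, hne, hXY⟩ := hTj j hj
      rw [if_neg hj, hXY, Set.ncard_pair hne]
  -- the equivalence
  have hequiv : {x : (ℝ × ℝ) × (Fin n → ℝ × ℝ) | x.1 = C ∧ ∀ j, x.2 j ∈ T j}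
      ≃ (∀ j : Fin n, ↥(T j)) :=
    { toFun := fun x j => ⟨x.val.2 j, x.property.2 j⟩
      invFun := fun f => ⟨(C, fun j => (f j).val), rfl, fun j => (f j).property⟩
      left_inv := fun x => Subtype.ext (Prod.ext x.property.1.symm rfl)
      right_inv := fun f => funext fun j => Subtype.ext rfl }
  have hcardpi : Nat.card (∀ j : Fin n, ↥(T j)) = 2 ^ (n - 1) := by
    rw [Nat.card_pi]
    have h1 : ∀ j : Fin n, Nat.card ↥(T j) = if j = k₀ then 1 else 2 := by
      intro j
      rw [Nat.card_coe_set_eq, hTcard j]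
    calc (∏ j : Fin n, Nat.card ↥(T j)) = ∏ j : Fin n, (if j = k₀ then 1 else 2) :=
          Finset.prod_congr rfl (fun j _ => h1 j)
      _ = (∏ j ∈ Finset.univ \ {k₀}, (if j = k₀ then 1 else 2)) *
            (if k₀ = k₀ then 1 else 2) :=
          Finset.prod_eq_prod_diff_singleton_mul (Finset.mem_univ k₀) _
      _ = (∏ j ∈ Finset.univ \ {k₀}, 2) * 1 := by
          rw [if_pos rfl]
          congr 1
          apply Finset.prod_congr rfl
          intro j hj
          rw [if_neg (by simpa using (Finset.mem_sdiff.1 hj).2)]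
      _ = 2 ^ (n - 1) := by
          rw [Finset.prod_const, mul_one]
          congr 1
          rw [Finset.card_sdiff_of_subset (by simp)]
          simp
  have hncard : {x ∈ MSpace n R | ∃ k : Fin n, x.1 - x.2 k = x.2 k - Bpt n R k
      ∧ x.1 - x.2 k = ((0:ℝ), s)}.ncard = 2 ^ (n - 1) := by
    rw [← Nat.card_coe_set_eq, hrep, Nat.card_congr hequiv, hcardpi]
  refine ⟨?_, hncard, ?_⟩
  · apply Set.finite_of_ncard_ne_zero
    rw [hncard]
    positivity
  · intro x hx
    rw [hrep] at hx
    exact hx.1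

/-- `d_n`, the maximum distance between `n`-th roots of unity. -/
noncomputable def dmax (n : ℕ) : ℝ :=
  if Even n then 2
  else Real.sqrt (2 - 2 * Real.cos (2 * ((n / 2 : ℕ) : ℝ) * Real.pi / (n : ℝ)))

/-- The critical radius `R_n = 2 / d_n`. -/
noncomputable def Rcrit (n : ℕ) : ℝ := 2 / dmax n

lemma Rc_of_Rcrit (n : ℕ) (hn3 : 3 ≤ n) (hodd : Odd n) (R : ℝ) (hR0 : 0 < R)
    (hRn : R < Rcrit n) : R * Real.cos (π / (2 * n)) < 1 := by
  have hn : 0 < n := by omega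
  have hnR : (0:ℝ) < n := by exact_mod_cast hn
  have hcosc := mycosc_pos n (by omega)
  have hnev : ¬ Even n := Nat.not_even_iff_odd.2 hodd
  obtain ⟨l, hl⟩ := hodd
  have hm : ((n / 2 : ℕ) : ℝ) = ((n:ℝ) - 1) / 2 := by
    have : n / 2 = l := by omega
    rw [this]
    have : (n:ℝ) = 2 * l + 1 := by exact_mod_cast congrArg (Nat.cast : ℕ → ℝ) hl
    rw [this]
    ring
  have harg : 2 * ((n / 2 : ℕ) : ℝ) * π / n = π - 2 * (π / (2 * n)) := by
    rw [hm]; field_simp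
  have hcos2 : Real.cos (2 * (π / (2 * n))) = 2 * Real.cos (π / (2 * n)) ^ 2 - 1 :=
    Real.cos_two_mul _
  have hdm : dmax n = 2 * Real.cos (π / (2 * n)) := by
    rw [dmax, if_neg hnev, harg, Real.cos_pi_sub, hcos2]
    rw [show 2 - 2 * -(2 * Real.cos (π / (2 * n)) ^ 2 - 1) = (2 * Real.cos (π / (2 * n))) ^ 2
      by ring]
    exact Real.sqrt_sq (by positivity)
  rw [Rcrit, hdm] at hRn
  have h1 : 2 / (2 * Real.cos (π / (2 * n))) = 1 / Real.cos (π / (2 * n)) := by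
    field_simp
  rw [h1] at hRn
  calc R * Real.cos (π / (2 * n))
      < (1 / Real.cos (π / (2 * n))) * Real.cos (π / (2 * n)) :=
        mul_lt_mul_of_pos_right hRn hcosc
    _ = 1 := by field_simp


/-- Suppose `n ≥ 3` is odd and `0 < R < R_n`. The set of configurations in `M_n(R)`
having a stretched-out arm parallel to the y-axis (some `k` with
`a_k = b_k = (0, 1)` or `a_k = b_k = (0, −1)`) is finite, with exactly `2^n`
elements. -/
theorem stmt19 (n : ℕ) (hn : 3 ≤ n) (hodd : Odd n) (R : ℝ)
    (hR0 : 0 < R) (hRn : R < Rcrit n) :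
    {x ∈ MSpace n R | ∃ k : Fin n,
        x.1 - x.2 k = x.2 k - Bpt n R k ∧
        (x.1 - x.2 k = ((0 : ℝ), (1 : ℝ)) ∨
         x.1 - x.2 k = ((0 : ℝ), (-1 : ℝ)))}.Finite ∧
    {x ∈ MSpace n R | ∃ k : Fin n,
        x.1 - x.2 k = x.2 k - Bpt n R k ∧
        (x.1 - x.2 k = ((0 : ℝ), (1 : ℝ)) ∨
         x.1 - x.2 k = ((0 : ℝ), (-1 : ℝ)))}.ncard = 2 ^ n := by
  have hRc := Rc_of_Rcrit n hn hodd R hR0 hRn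
  obtain ⟨k₁, ε₁, hε₁, hk₁⟩ := pole_exists n hn hodd 1 (Or.inl rfl)
  obtain ⟨k₂, ε₂, hε₂, hk₂⟩ := pole_exists n hn hodd (-1) (Or.inr rfl)
  obtain ⟨hfin₁, hcard₁, hcen₁⟩ :=
    half n hn hodd R hR0 hRc 1 1 ε₁ (by norm_num) (Or.inl rfl) hε₁ k₁ hk₁
  obtain ⟨hfin₂, hcard₂, hcen₂⟩ :=
    half n hn hodd R hR0 hRc (-1) (-1) ε₂ (by norm_num) (Or.inr rfl) hε₂ k₂ hk₂
  have hsplit : {x ∈ MSpace n R | ∃ k : Fin n,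
        x.1 - x.2 k = x.2 k - Bpt n R k ∧
        (x.1 - x.2 k = ((0 : ℝ), (1 : ℝ)) ∨
         x.1 - x.2 k = ((0 : ℝ), (-1 : ℝ)))}
      = {x ∈ MSpace n R | ∃ k : Fin n, x.1 - x.2 k = x.2 k - Bpt n R k
            ∧ x.1 - x.2 k = ((0:ℝ), (1:ℝ))}
        ∪ {x ∈ MSpace n R | ∃ k : Fin n, x.1 - x.2 k = x.2 k - Bpt n R k
            ∧ x.1 - x.2 k = ((0:ℝ), (-1:ℝ))} := by
    ext x
    simp only [Set.mem_sep_iff, Set.mem_union]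
    constructor
    · rintro ⟨hM, k, hA, hB | hB⟩
      · exact Or.inl ⟨hM, k, hA, hB⟩
      · exact Or.inr ⟨hM, k, hA, hB⟩
    · rintro (⟨hM, k, hA, hB⟩ | ⟨hM, k, hA, hB⟩)
      · exact ⟨hM, k, hA, Or.inl hB⟩
      · exact ⟨hM, k, hA, Or.inr hB⟩
  have hdisj : Disjoint
      {x ∈ MSpace n R | ∃ k : Fin n, x.1 - x.2 k = x.2 k - Bpt n R k
          ∧ x.1 - x.2 k = ((0:ℝ), (1:ℝ))}
      {x ∈ MSpace n R | ∃ k : Fin n, x.1 - x.2 k = x.2 k - Bpt n R k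
          ∧ x.1 - x.2 k = ((0:ℝ), (-1:ℝ))} := by
    rw [Set.disjoint_left]
    intro x hx1 hx2
    have hc1 := hcen₁ x hx1
    have hc2 := hcen₂ x hx2
    have heq := hc1.symm.trans hc2
    rw [Prod.ext_iff] at heq
    simp only at heq
    have hcl := Bclose n hn hodd R hR0 hRc k₁ k₂
    nlinarith [hcl, heq.1, heq.2, sq_nonneg ((Bpt n R k₁).1 - (Bpt n R k₂).1)]
  rw [hsplit]
  refine ⟨Set.Finite.union hfin₁ hfin₂, ?_⟩
  rw [Set.ncard_union_eq hdisj hfin₁ hfin₂, hcard₁, hcard₂]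
  have h1 : n - 1 + 1 = n := by omega
  calc 2 ^ (n - 1) + 2 ^ (n - 1) = 2 ^ (n - 1) * 2 := by ring
    _ = 2 ^ (n - 1 + 1) := (pow_succ 2 (n - 1)).symm
    _ = 2 ^ n := by rw [h1]
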